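/- Assume 1 ≤ p ≤ q and R⁺(a) + R⁻(a) ≤ 2p. Then for every real number c, at least one of the three quantities #{i : 1 ≤ i ≤ p, a_i ≥ c}, #{i : 1 ≤ i ≤ p, a_i ≤ c}, #{i : 1 ≤ i ≤ p, a_i ≠ c} is at most 2. (This is the first dichotomy step in the proof of Theorem 1.2(2): at least one of x+y, y+z, x+z is ≤ 2.) -/

import Mathlib

/-- The sequence `a` (with relevant indices `1, …, p+q`) is dominant:
`a 1 ≥ a 2 ≥ … ≥ a p` and `a (p+1) ≥ a (p+2) ≥ … ≥ a (p+q)`. -/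
def Dominant (p q : ℕ) (a : ℕ → ℝ) : Prop :=
  (∀ i j, 1 ≤ i → i ≤ j → j ≤ p → a j ≤ a i) ∧
  (∀ i j, p + 1 ≤ i → i ≤ j → j ≤ p + q → a j ≤ a i)

/-- `R⁺(a) = #{(i,j) : 1 ≤ i ≤ p, p+1 ≤ j ≤ p+q, a i > a j}`. -/
noncomputable def Rplus (p q : ℕ) (a : ℕ → ℝ) : ℕ :=
  ((Finset.Icc 1 p ×ˢ Finset.Icc (p + 1) (p + q)).filter
    (fun ij => a ij.2 < a ij.1)).card

/-- `R⁻(a) = #{(i,j) : 1 ≤ i ≤ p, p+1 ≤ j ≤ p+q, a j > a i}`. -/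
noncomputable def Rminus (p q : ℕ) (a : ℕ → ℝ) : ℕ :=
  ((Finset.Icc 1 p ×ˢ Finset.Icc (p + 1) (p + q)).filter
    (fun ij => a ij.1 < a ij.2)).card

/-- first dichotomy step in the proof of Theorem 1.2(2). If
`1 ≤ p ≤ q` and `R⁺(a) + R⁻(a) ≤ 2p`, then for every real `c` at least one of
`#{i : 1 ≤ i ≤ p, a i ≥ c}`, `#{i : 1 ≤ i ≤ p, a i ≤ c}`,
`#{i : 1 ≤ i ≤ p, a i ≠ c}` is at most `2`. -/
theorem dichotomy_step (p q : ℕ) (a : ℕ → ℝ)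
    (hp : 1 ≤ p) (hpq : p ≤ q)
    (hR : Rplus p q a + Rminus p q a ≤ 2 * p) :
    ∀ c : ℝ,
      ((Finset.Icc 1 p).filter (fun i => c ≤ a i)).card ≤ 2 ∨
      ((Finset.Icc 1 p).filter (fun i => a i ≤ c)).card ≤ 2 ∨
      ((Finset.Icc 1 p).filter (fun i => a i ≠ c)).card ≤ 2 := by
  intro c
  by_contra h
  push_neg at h
  obtain ⟨hx, hy, hz⟩ := h
  set S := (Finset.Icc 1 p ×ˢ Finset.Icc (p + 1) (p + q)).filter
    (fun ij => a ij.1 ≠ a ij.2) with hS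
  have hsum : Rplus p q a + Rminus p q a = S.card := by
    rw [Rplus, Rminus, ← Finset.card_union_of_disjoint]
    · rw [← Finset.filter_or]
      congr 1
      apply Finset.filter_congr
      intro ij _
      simp only [ne_eq, eq_iff_iff]
      constructor
      · rintro (h1 | h1) heq <;> rw [heq] at h1 <;> exact lt_irrefl _ h1
      · intro hne
        rcases lt_or_gt_of_ne hne with h1 | h1
        · exact Or.inr h1
        · exact Or.inl h1
    · rw [Finset.disjoint_filter]
      intro ij _ h1 h2
      linarith
  have hfiber : ∀ j ∈ Finset.Icc (p + 1) (p + q),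
      3 ≤ (S.filter (fun ij => ij.2 = j)).card := by
    intro j hj
    have key : ∀ T : Finset ℕ, T ⊆ Finset.Icc 1 p → (∀ i ∈ T, a i ≠ a j) →
        T.card ≤ (S.filter (fun ij => ij.2 = j)).card := by
      intro T hTsub hTne
      have : T.image (fun i => (i, j)) ⊆ S.filter (fun ij => ij.2 = j) := by
        intro ij hij
        simp only [Finset.mem_image] at hij
        obtain ⟨i, hi, rfl⟩ := hij
        simp only [Finset.mem_filter, hS, Finset.mem_product]
        exact ⟨⟨⟨hTsub hi, hj⟩, hTne i hi⟩, trivial⟩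
      calc T.card = (T.image (fun i => (i, j))).card := by
            rw [Finset.card_image_of_injective]
            intro x y hxy
            exact (Prod.mk.injEq _ _ _ _ ▸ hxy).1
        _ ≤ _ := Finset.card_le_card this
    rcases lt_trichotomy (a j) c with hc | hc | hc
    · refine le_trans hx (key _ (Finset.filter_subset _ _) ?_)
      intro i hi
      simp only [Finset.mem_filter] at hi
      intro heq; rw [heq] at hi; linarith [hi.2]
    · refine le_trans hz (key _ (Finset.filter_subset _ _) ?_)
      intro i hi
      simp only [Finset.mem_filter] at hi
      rw [hc]; exact hi.2
    · refine le_trans hy (key _ (Finset.filter_subset _ _) ?_)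
      intro i hi
      simp only [Finset.mem_filter] at hi
      intro heq; rw [heq] at hi; linarith [hi.2]
  have hcard : S.card = ∑ j ∈ Finset.Icc (p + 1) (p + q),
      (S.filter (fun ij => ij.2 = j)).card := by
    apply Finset.card_eq_sum_card_fiberwise
    intro ij hij
    simp only [hS, Finset.mem_coe, Finset.mem_filter, Finset.mem_product] at hij
    exact hij.1.2
  have h3q : 3 * q ≤ S.card := by
    rw [hcard]
    calc 3 * q = ∑ _j ∈ Finset.Icc (p + 1) (p + q), 3 := by
          rw [Finset.sum_const, Nat.card_Icc]
          simp [mul_comm]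
      _ ≤ _ := Finset.sum_le_sum hfiber
  omega
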